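/- For any binary probability vector θ = (φ, 1-φ) with 0 < φ < 1/2, it holds that H(θ)·S(θ) < V(θ)² + φ²(1-φ)(1-2φ)·(log((1-φ)/φ))³, where H(θ) = φ·log(1/φ) + (1-φ)·log(1/(1-φ)), V(θ) = φ(1-φ)·(log((1-φ)/φ))², and S(θ) = φ(1-φ)(1-2φ)·(log((1-φ)/φ))³. -/

import Mathlib

theorem stmt_7 (φ : ℝ) (hφ0 : 0 < φ) (hφ1 : φ < 1/2)
    (H V S : ℝ)
    (hH : H = φ * Real.log (1 / φ) + (1 - φ) * Real.log (1 / (1 - φ)))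
    (hV : V = φ * (1 - φ) * (Real.log ((1 - φ) / φ)) ^ 2)
    (hS : S = φ * (1 - φ) * (1 - 2*φ) * (Real.log ((1 - φ) / φ)) ^ 3) :
    H * S < V ^ 2 + φ ^ 2 * (1 - φ) * (1 - 2*φ) * (Real.log ((1 - φ) / φ)) ^ 3 := by
  have h1φ : 0 < 1 - φ := by linarith
  have ht : 0 < 1 - 2*φ := by linarith
  have hφne : φ ≠ 0 := ne_of_gt hφ0
  have h1φne : (1:ℝ) - φ ≠ 0 := ne_of_gt h1φ
  set a := Real.log φ with ha
  set b := Real.log (1 - φ) with hb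
  have hLdef : Real.log ((1 - φ)/φ) = b - a := Real.log_div h1φne hφne
  have hL : 0 < b - a := by
    rw [← hLdef]
    exact Real.log_pos (by rw [lt_div_iff₀ hφ0]; linarith)
  have hHa : H = φ * (b - a) - b := by
    rw [hH, one_div, one_div, Real.log_inv, Real.log_inv, ← ha, ← hb]; ring
  -- key1 : -(1-φ)*b < φ
  have key1 : -((1 - φ) * b) < φ := by
    have h := Real.log_lt_sub_one_of_pos (x := (1 - φ)⁻¹) (by positivity)
      (by
        intro hc
        have : (1:ℝ) - φ = 1 := by
          field_simp at hc; linarith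
        linarith)
    rw [Real.log_inv, ← hb] at h
    have h2 : (1 - φ) * (-b) < (1 - φ) * ((1 - φ)⁻¹ - 1) := by
      exact (mul_lt_mul_iff_right₀ h1φ).mpr h
    have h3 : (1 - φ) * ((1 - φ)⁻¹ - 1) = φ := by field_simp; ring
    linarith [h2, h3.le]
  -- key2 : (1-φ)*(b-a) ≥ 1-2φ
  have key2 : 1 - 2*φ ≤ (1 - φ) * (b - a) := by
    have h := Real.log_le_sub_one_of_pos (x := φ / (1 - φ)) (by positivity)
    have hlog : Real.log (φ / (1 - φ)) = a - b := Real.log_div hφne h1φne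
    rw [hlog] at h
    have h2 : (1 - φ) * (a - b) ≤ (1 - φ) * (φ / (1 - φ) - 1) :=
      (mul_le_mul_iff_right₀ h1φ).mpr h
    have h3 : (1 - φ) * (φ / (1 - φ) - 1) = -(1 - 2*φ) := by field_simp; ring
    nlinarith [h2, h3]
  -- main scalar inequality
  have hkey : (1 - 2*φ) * H < φ * (1 - φ) * (b - a) + φ * (1 - 2*φ) := by
    rw [hHa]
    nlinarith [mul_lt_mul_of_pos_left key1 ht, mul_le_mul_of_nonneg_left key2 (sq_nonneg φ)]
  have hpos : 0 < φ * (1 - φ) * (b - a)^3 := by positivity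
  have hfin := mul_lt_mul_of_pos_left hkey hpos
  rw [hV, hS, hLdef]
  nlinarith [hfin]
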